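/- Let H₀ be a bounded self-adjoint operator on a complex Hilbert space 𝓗, F : 𝓗 →L[ℂ] 𝓚 a compact operator into a complex Hilbert space 𝓚, and λ ∈ ℝ. Then λ is semi-regular for H₀ with respect to F (i.e., there exist a bounded self-adjoint J on 𝓚 and r ∈ ℝ such that T_{λ+i0}(H₀ + r F* J F) exists in norm) if and only if the direction F*F is λ-regular for H₀ (i.e., there exists r ∈ ℝ such that T_{λ+i0}(H₀ + r F* F) exists in norm). -/

import Mathlib

set_option maxHeartbeats 1600000

open ContinuousLinearMap Filter Complex Set Topology

/-! ### Auxiliary general lemmas -/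

lemma ring_inverse_mul_of_isUnit {M₀ : Type*} [MonoidWithZero M₀] {a b : M₀} (ha : IsUnit a)
    (hb : IsUnit b) : Ring.inverse (a * b) = Ring.inverse b * Ring.inverse a := by
  obtain ⟨ua, rfl⟩ := ha
  obtain ⟨ub, rfl⟩ := hb
  rw [← Units.val_mul, Ring.inverse_unit, Ring.inverse_unit, Ring.inverse_unit, mul_inv_rev,
    Units.val_mul]

lemma isUnit_ring_inverse_of {M₀ : Type*} [MonoidWithZero M₀] {a : M₀} (ha : IsUnit a) :
    IsUnit (Ring.inverse a) := by
  obtain ⟨ua, rfl⟩ := ha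
  rw [Ring.inverse_unit]
  exact (ua⁻¹).isUnit

/-- helper : from `t^2 ≤ a * t * b` conclude `t ≤ a*b`. -/
lemma le_of_sq_le (t a b : ℝ) (ht : 0 ≤ t) (ha : 0 ≤ a) (hb : 0 ≤ b)
    (h : t^2 ≤ a * t * b) : t ≤ a * b := by
  rcases eq_or_lt_of_le ht with h0 | h0
  · rw [← h0]; positivity
  · nlinarith

section Swap
variable {E F : Type*} [NormedAddCommGroup E] [NormedSpace ℂ E]
  [NormedAddCommGroup F] [NormedSpace ℂ F]

/-- If `1 + g f` is invertible, so is `1 + f g`, and `f (1+gf)⁻¹ = (1+fg)⁻¹ f`. -/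
lemma unit_swap (f : E →L[ℂ] F) (g : F →L[ℂ] E) (h : IsUnit (1 + g ∘L f)) :
    IsUnit (1 + f ∘L g) ∧
      f ∘L Ring.inverse (1 + g ∘L f) = Ring.inverse (1 + f ∘L g) ∘L f := by
  set W : E →L[ℂ] E := Ring.inverse (1 + g ∘L f) with hWdef
  have hW1 : (1 + g ∘L f) * W = 1 := Ring.mul_inverse_cancel _ h
  have hW2 : W * (1 + g ∘L f) = 1 := Ring.inverse_mul_cancel _ h
  have hW1' : ∀ v, W v + g (f (W v)) = v := by
    intro v
    have := ContinuousLinearMap.ext_iff.mp hW1 v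
    simpa [ContinuousLinearMap.mul_apply, ContinuousLinearMap.add_apply,
      ContinuousLinearMap.comp_apply, ContinuousLinearMap.one_apply] using this
  have hW2' : ∀ v, W (v + g (f v)) = v := by
    intro v
    have := ContinuousLinearMap.ext_iff.mp hW2 v
    simpa [ContinuousLinearMap.mul_apply, ContinuousLinearMap.add_apply,
      ContinuousLinearMap.comp_apply, ContinuousLinearMap.one_apply] using this
  set V : F →L[ℂ] F := 1 - f ∘L (W ∘L g) with hVdef
  have hleft : (1 + f ∘L g) * V = 1 := by
    ext u
    simp only [ContinuousLinearMap.mul_apply, ContinuousLinearMap.add_apply,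
      ContinuousLinearMap.sub_apply, ContinuousLinearMap.comp_apply,
      ContinuousLinearMap.one_apply, hVdef]
    have h3 : g (f (W (g u))) = g u - W (g u) := eq_sub_of_add_eq' (hW1' (g u))
    rw [map_sub g, h3, sub_sub_cancel]
    abel
  have hright : V * (1 + f ∘L g) = 1 := by
    ext u
    simp only [ContinuousLinearMap.mul_apply, ContinuousLinearMap.add_apply,
      ContinuousLinearMap.sub_apply, ContinuousLinearMap.comp_apply,
      ContinuousLinearMap.one_apply, hVdef]
    rw [map_add g, hW2' (g u)]
    abel
  have hunit : IsUnit (1 + f ∘L g) := ⟨⟨1 + f ∘L g, V, hleft, hright⟩, rfl⟩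
  refine ⟨hunit, ?_⟩
  have h4 : (1 + f ∘L g) ∘L (f ∘L W) = f := by
    ext u
    simp only [ContinuousLinearMap.comp_apply, ContinuousLinearMap.add_apply,
      ContinuousLinearMap.one_apply]
    calc f (W u) + f (g (f (W u))) = f (W u + g (f (W u))) := by rw [map_add]
      _ = f u := by rw [hW1' u]
  have h5 : Ring.inverse (1 + f ∘L g) * (1 + f ∘L g) = 1 := Ring.inverse_mul_cancel _ hunit
  calc f ∘L W = ((Ring.inverse (1 + f ∘L g) * (1 + f ∘L g)) : F →L[ℂ] F) ∘L (f ∘L W) := by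
        rw [h5, ContinuousLinearMap.one_def, ContinuousLinearMap.id_comp]
    _ = Ring.inverse (1 + f ∘L g) ∘L ((1 + f ∘L g) ∘L (f ∘L W)) := by
        rw [ContinuousLinearMap.mul_def, ContinuousLinearMap.comp_assoc]
    _ = Ring.inverse (1 + f ∘L g) ∘L f := by rw [h4]

end Swap

section HilbertAux

variable {E : Type*} [NormedAddCommGroup E] [InnerProductSpace ℂ E] [CompleteSpace E]

local notation "⟪" x ", " y "⟫" => @inner ℂ _ _ x y

/-- A bounded-below operator with bounded-below adjoint is invertible. -/
lemma isUnit_of_bddBelow (R : E →L[ℂ] E) (c : ℝ)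
    (h : ∀ u, ‖u‖ ≤ c * ‖R u‖) (h' : ∀ u, ‖u‖ ≤ c * ‖adjoint R u‖) : IsUnit R := by
  rcases subsingleton_or_nontrivial E with hE | hE
  · exact ⟨⟨R, R, Subsingleton.elim _ _, Subsingleton.elim _ _⟩, rfl⟩
  have hc : (0:ℝ) ≤ c := by
    rcases exists_ne (0 : E) with ⟨u, hu⟩
    have := h u
    nlinarith [norm_pos_iff.mpr hu, norm_nonneg (R u), norm_nonneg u]
  have hinj : R.ker = ⊥ := by
    rw [LinearMap.ker_eq_bot']
    intro u hu
    have := h u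
    rw [show R u = 0 from hu, norm_zero, mul_zero] at this
    exact norm_le_zero_iff.mp this
  have hanti : AntilipschitzWith ⟨c, hc⟩ R :=
    ContinuousLinearMap.antilipschitz_of_bound R h
  have hclosed : IsClosed (Set.range R) := hanti.isClosed_range R.uniformContinuous
  have hclosed' : IsClosed ((R.range : Submodule ℂ E) : Set E) := by
    exact hclosed
  haveI : CompleteSpace (R.range) := hclosed'.completeSpace_coe
  have horth : (R.range)ᗮ = ⊥ := by
    rw [Submodule.eq_bot_iff]
    intro u hu
    have h1 : ⟪R (adjoint R u), u⟫ = 0 :=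
      hu (R (adjoint R u)) (LinearMap.mem_range_self _ _)
    have h2 : ⟪adjoint R u, adjoint R u⟫ = 0 := by
      rw [ContinuousLinearMap.adjoint_inner_left, ← inner_conj_symm, h1, map_zero]
    have h3 : adjoint R u = 0 := inner_self_eq_zero.mp h2
    have := h' u
    rw [h3, norm_zero, mul_zero] at this
    exact norm_le_zero_iff.mp this
  have hsurj : R.range = ⊤ := Submodule.orthogonal_eq_bot_iff.mp horth
  let e := ContinuousLinearEquiv.ofBijective R hinj hsurj
  have he : ∀ x, e x = R x := fun x =>
    congrFun (ContinuousLinearEquiv.coeFn_ofBijective R hinj hsurj) x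
  refine ⟨⟨R, (e.symm : E →L[ℂ] E), ?_, ?_⟩, rfl⟩
  · ext u
    have : R ((e.symm : E →L[ℂ] E) u) = e (e.symm u) := (he _).symm
    simp only [ContinuousLinearMap.mul_apply, ContinuousLinearMap.one_apply,
      ContinuousLinearEquiv.coe_coe] at *
    rw [this, e.apply_symm_apply]
  · ext u
    have : e.symm (R u) = e.symm (e u) := by rw [he]
    simp only [ContinuousLinearMap.mul_apply, ContinuousLinearMap.one_apply,
      ContinuousLinearEquiv.coe_coe] at *
    rw [this, e.symm_apply_apply]

lemma im_inner_map_self_eq_zero {J : E →L[ℂ] E} (hJ : IsSelfAdjoint J) (u : E) :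
    (⟪J u, u⟫).im = 0 := by
  have hJ' : adjoint J = J := ContinuousLinearMap.isSelfAdjoint_iff'.mp hJ
  have h1 : ⟪J u, u⟫ = ⟪u, J u⟫ := by
    conv_lhs => rw [← hJ']
    exact ContinuousLinearMap.adjoint_inner_left J u u
  have h2 : (starRingEnd ℂ) ⟪J u, u⟫ = ⟪J u, u⟫ := by
    rw [inner_conj_symm, ← h1]
  rwa [Complex.conj_eq_iff_im] at h2

lemma im_inner_map_self_eq_zero' {J : E →L[ℂ] E} (hJ : IsSelfAdjoint J) (u : E) :
    (⟪u, J u⟫).im = 0 := by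
  have hJ' : adjoint J = J := ContinuousLinearMap.isSelfAdjoint_iff'.mp hJ
  have h1 : ⟪J u, u⟫ = ⟪u, J u⟫ := by
    conv_lhs => rw [← hJ']
    exact ContinuousLinearMap.adjoint_inner_left J u u
  rw [← h1]
  exact im_inner_map_self_eq_zero hJ u

lemma bdd_below_sub_smul {B : E →L[ℂ] E} (hB : IsSelfAdjoint B) {w : ℂ} (hw : w.im ≠ 0)
    (u : E) : ‖u‖ ≤ |w.im|⁻¹ * ‖(B - w • (1 : E →L[ℂ] E)) u‖ := by
  set R := B - w • (1 : E →L[ℂ] E) with hR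
  have h1 : ⟪u, R u⟫ = ⟪u, B u⟫ - w * ⟪u, u⟫ := by
    simp [hR, ContinuousLinearMap.sub_apply, inner_sub_right, inner_smul_right]
  have h2 : (⟪u, B u⟫).im = 0 := im_inner_map_self_eq_zero' hB u
  have hx : ⟪u, u⟫ = ((‖u‖^2 : ℝ) : ℂ) := by
    rw [inner_self_eq_norm_sq_to_K]; norm_cast
  have h4 : (⟪u, R u⟫).im = -(w.im * ‖u‖^2) := by
    rw [h1, hx]
    simp only [Complex.sub_im, h2, Complex.mul_im, ← Complex.ofReal_pow, Complex.ofReal_re,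
      Complex.ofReal_im]
    ring
  have h5 : |w.im| * ‖u‖^2 ≤ ‖u‖ * ‖R u‖ := by
    have habs : |(⟪u, R u⟫).im| ≤ ‖⟪u, R u⟫‖ := Complex.abs_im_le_norm _
    rw [h4, abs_neg, abs_mul, _root_.abs_of_nonneg (by positivity : (0:ℝ) ≤ ‖u‖^2)] at habs
    exact le_trans habs (norm_inner_le_norm u (R u))
  have hwim : 0 < |w.im| := abs_pos.mpr hw
  rcases eq_or_lt_of_le (norm_nonneg u) with h0 | h0
  · rw [← h0]; positivity
  · have h6 : |w.im| * ‖u‖ ≤ ‖R u‖ := by nlinarith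
    calc ‖u‖ = |w.im|⁻¹ * (|w.im| * ‖u‖) := by field_simp
      _ ≤ |w.im|⁻¹ * ‖R u‖ := mul_le_mul_of_nonneg_left h6 (by positivity)

/-- For a self-adjoint operator `A` and nonreal `z`, `A - z` is invertible. -/
lemma isUnit_sub_smul {A : E →L[ℂ] E} (hA : IsSelfAdjoint A) {z : ℂ} (hz : z.im ≠ 0) :
    IsUnit (A - z • (1 : E →L[ℂ] E)) := by
  have hadj : adjoint (A - z • (1 : E →L[ℂ] E)) = A - (starRingEnd ℂ) z • 1 := by
    rw [← ContinuousLinearMap.star_eq_adjoint, star_sub, star_smul, star_one, hA.star_eq]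
    rfl
  apply isUnit_of_bddBelow _ (|z.im|⁻¹) (bdd_below_sub_smul hA hz)
  intro u
  rw [hadj]
  have hz' : ((starRingEnd ℂ) z).im ≠ 0 := by
    simp only [Complex.conj_im]; exact neg_ne_zero.mpr hz
  have := bdd_below_sub_smul hA hz' u
  simpa [Complex.conj_im, abs_neg] using this

/-- From a compact operator and a bounded sequence, extract a subsequence on which the
images converge. -/
lemma IsCompactOperator.exists_subseq {F' : Type*} [NormedAddCommGroup F'] [NormedSpace ℂ F']
    {S : E →L[ℂ] F'} (hS : IsCompactOperator (S : E → F')) (x : ℕ → E)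
    (hx : ∀ n, ‖x n‖ ≤ 1) :
    ∃ (v : F') (φ : ℕ → ℕ), StrictMono φ ∧ Tendsto (fun n => S (x (φ n))) atTop (𝓝 v) := by
  obtain ⟨K, hK, hKmem⟩ := hS
  obtain ⟨ε, hε, hball⟩ := Metric.mem_nhds_iff.mp hKmem
  have hmem : ∀ n, S (((ε/2 : ℝ):ℂ) • x n) ∈ K := by
    intro n
    apply hball
    rw [Metric.mem_ball, dist_zero_right, norm_smul]
    have h9 : ‖((ε/2 : ℝ):ℂ)‖ = ε/2 := by
      rw [Complex.norm_real, Real.norm_eq_abs, abs_of_pos (by linarith)]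
    rw [h9]
    nlinarith [hx n, norm_nonneg (x n)]
  obtain ⟨v', hv'K, φ, hφ, hconv⟩ :=
    hK.tendsto_subseq (x := fun n => S (((ε/2 : ℝ):ℂ) • x n)) hmem
  refine ⟨((2/ε : ℝ):ℂ) • v', φ, hφ, ?_⟩
  have heq : ∀ n, S (x (φ n)) = ((2/ε : ℝ):ℂ) • S (((ε/2 : ℝ):ℂ) • x (φ n)) := by
    intro n
    rw [map_smul, smul_smul]
    rw [show ((2/ε : ℝ):ℂ) * ((ε/2 : ℝ):ℂ) = 1 by
      rw [← Complex.ofReal_mul]; norm_cast; field_simp]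
    rw [one_smul]
  simp_rw [heq]
  exact (hconv.const_smul _)

/-- If `1 + S₁` (with `S₁` compact) has approximate kernel vectors, it has a genuine
kernel vector. -/
lemma exists_ker_of_approx {S₁ : E →L[ℂ] E} (hS₁ : IsCompactOperator (S₁ : E → E))
    (h : ∀ n : ℕ, ∃ u : E, ‖u‖ = 1 ∧ ‖(1 + S₁) u‖ ≤ 1/(n+1)) :
    ∃ u, u ≠ 0 ∧ (1 + S₁) u = 0 := by
  choose x hx1 hx2 using h
  obtain ⟨v, φ, hφ, hconv⟩ := hS₁.exists_subseq x (fun n => le_of_eq (hx1 n))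
  have hRto0 : Tendsto (fun n => (1 + S₁) (x (φ n))) atTop (𝓝 0) := by
    apply squeeze_zero_norm (a := fun n => 1/((φ n : ℝ)+1)) (fun n => hx2 (φ n))
    have h8 : Tendsto (fun n : ℕ => 1/((n:ℝ)+1)) atTop (𝓝 0) :=
      tendsto_one_div_add_atTop_nhds_zero_nat
    exact h8.comp hφ.tendsto_atTop
  have hxconv : Tendsto (fun n => x (φ n)) atTop (𝓝 (-v)) := by
    have : ∀ n, x (φ n) = (1 + S₁) (x (φ n)) - S₁ (x (φ n)) := by
      intro n
      simp only [ContinuousLinearMap.add_apply, ContinuousLinearMap.one_apply]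
      abel
    have h10 := hRto0.sub hconv
    have h11 := h10.congr (fun n => (this n).symm)
    simpa using h11
  have hnorm : ‖(-v)‖ = 1 := by
    have h1 : Tendsto (fun n => ‖x (φ n)‖) atTop (𝓝 ‖(-v)‖) := hxconv.norm
    have h2 : Tendsto (fun n => ‖x (φ n)‖) atTop (𝓝 1) := by
      simp_rw [hx1]; exact tendsto_const_nhds
    exact tendsto_nhds_unique h1 h2
  refine ⟨-v, fun h0 => by simp [h0] at hnorm, ?_⟩
  have h3 : Tendsto (fun n => (1 + S₁) (x (φ n))) atTop (𝓝 ((1 + S₁) (-v))) :=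
    ((1 + S₁).continuous.tendsto _).comp hxconv
  exact tendsto_nhds_unique h3 hRto0

/-- If `R` is not bounded below, produce approximate kernel vectors. -/
lemma approx_of_not_bddBelow {R : E →L[ℂ] E}
    (h : ¬ ∃ c : ℝ, ∀ u, ‖u‖ ≤ c * ‖R u‖) :
    ∀ n : ℕ, ∃ u : E, ‖u‖ = 1 ∧ ‖R u‖ ≤ 1/(n+1) := by
  intro n
  push_neg at h
  obtain ⟨u, hu⟩ := h ((n:ℝ)+1)
  have hu0 : u ≠ 0 := by
    rintro rfl
    simp at hu
  have hnu : 0 < ‖u‖ := norm_pos_iff.mpr hu0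
  refine ⟨((‖u‖⁻¹ : ℝ):ℂ) • u, ?_, ?_⟩
  · rw [norm_smul, Complex.norm_real, Real.norm_eq_abs, abs_of_pos (by positivity),
      inv_mul_cancel₀ (ne_of_gt hnu)]
  · rw [map_smul, norm_smul, Complex.norm_real, Real.norm_eq_abs,
      abs_of_pos (by positivity : (0:ℝ) < ‖u‖⁻¹)]
    have hRu : ‖R u‖ ≤ ‖u‖ / ((n:ℝ)+1) := by
      rw [le_div_iff₀ (by positivity)]
      nlinarith [hu]
    calc ‖u‖⁻¹ * ‖R u‖ ≤ ‖u‖⁻¹ * (‖u‖ / ((n:ℝ)+1)) :=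
          mul_le_mul_of_nonneg_left hRu (by positivity)
      _ = 1/((n:ℝ)+1) := by field_simp

/-- Fredholm-type dichotomy: if `1 + S₁` (with `S₁` and its adjoint compact) is not
invertible, then `1 + S₁` or `1 + S₁†` has a kernel vector. -/
lemma ker_or_ker_star {S₁ : E →L[ℂ] E} (h1 : IsCompactOperator (S₁ : E → E))
    (h2 : IsCompactOperator ((adjoint S₁ : E →L[ℂ] E) : E → E))
    (h : ¬ IsUnit (1 + S₁)) :
    (∃ u, u ≠ 0 ∧ (1 + S₁) u = 0) ∨ (∃ u, u ≠ 0 ∧ (1 + adjoint S₁) u = 0) := by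
  have hadj : adjoint (1 + S₁) = 1 + adjoint S₁ := by
    rw [← ContinuousLinearMap.star_eq_adjoint, star_add, star_one,
      ContinuousLinearMap.star_eq_adjoint]
  by_cases hb : ∃ c : ℝ, ∀ u, ‖u‖ ≤ c * ‖(1 + S₁) u‖
  · by_cases hb' : ∃ c : ℝ, ∀ u, ‖u‖ ≤ c * ‖(1 + adjoint S₁) u‖
    · exfalso
      obtain ⟨c, hc⟩ := hb
      obtain ⟨c', hc'⟩ := hb'
      apply h
      apply isUnit_of_bddBelow (1 + S₁) (max c c')
      · intro u
        calc ‖u‖ ≤ c * ‖(1 + S₁) u‖ := hc u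
          _ ≤ max c c' * ‖(1 + S₁) u‖ :=
            mul_le_mul_of_nonneg_right (le_max_left _ _) (norm_nonneg _)
      · intro u
        rw [hadj]
        calc ‖u‖ ≤ c' * ‖(1 + adjoint S₁) u‖ := hc' u
          _ ≤ max c c' * ‖(1 + adjoint S₁) u‖ :=
            mul_le_mul_of_nonneg_right (le_max_right _ _) (norm_nonneg _)
    · exact Or.inr (exists_ker_of_approx h2 (approx_of_not_bddBelow hb'))
  · exact Or.inl (exists_ker_of_approx h1 (approx_of_not_bddBelow hb))

/-- A compact operator cannot have infinitely many eigenvectors with distinct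
eigenvalues all of modulus `≥ δ > 0`. -/
lemma no_infinite_eigenvalues {S : E →L[ℂ] E} (hS : IsCompactOperator (S : E → E))
    {δ : ℝ} (hδ : 0 < δ) (μ : ℕ → ℂ) (hinj : Function.Injective μ) (hμ : ∀ n, δ ≤ ‖μ n‖)
    (u : ℕ → E) (hu0 : ∀ n, u n ≠ 0) (heig : ∀ n, S (u n) = μ n • u n) : False := by
  have hli : LinearIndependent ℂ u := by
    apply Module.End.eigenvectors_linearIndependent' (↑S : Module.End ℂ E) μ hinj u
    intro i
    rw [Module.End.hasEigenvector_iff, Module.End.mem_eigenspace_iff]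
    exact ⟨heig i, hu0 i⟩
  set V : ℕ → Submodule ℂ E := fun n => Submodule.span ℂ (u '' Set.Iic n) with hV
  have hVmono : ∀ {m n}, m ≤ n → V m ≤ V n := by
    intro m n hmn
    exact Submodule.span_mono (Set.image_mono (Set.Iic_subset_Iic.mpr hmn))
  have hfin : ∀ n, FiniteDimensional ℂ (V n) := fun n =>
    FiniteDimensional.span_of_finite ℂ ((Set.finite_Iic n).image u)
  have huV : ∀ n, u n ∈ V n :=
    fun n => Submodule.subset_span ⟨n, Set.self_mem_Iic, rfl⟩
  have hnotmem : ∀ n, u (n+1) ∉ V n := by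
    intro n hmem
    exact hli.notMem_span_image (by simp : (n+1 : ℕ) ∉ Set.Iic n) hmem
  have hSV : ∀ n, ∀ v ∈ V n, S v ∈ V n := by
    intro n v hv
    induction hv using Submodule.span_induction with
    | mem x hx =>
      obtain ⟨k, hk, rfl⟩ := hx
      rw [heig k]
      exact Submodule.smul_mem _ _ (Submodule.subset_span ⟨k, hk, rfl⟩)
    | zero => simp
    | add x y _ _ hx hy => rw [map_add]; exact Submodule.add_mem _ hx hy
    | smul c x _ hx => rw [map_smul]; exact Submodule.smul_mem _ _ hx
  haveI : ∀ n, FiniteDimensional ℂ (V n) := hfin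
  haveI : ∀ n, CompleteSpace (V n) := fun n => FiniteDimensional.complete ℂ (V n)
  set p : ℕ → E := fun n => ((V n).orthogonalProjectionOnto (u (n+1)) : E) with hp
  have hpV : ∀ n, p n ∈ V n := fun n => ((V n).orthogonalProjectionOnto (u (n+1))).2
  set w : ℕ → E := fun n => u (n+1) - p n with hw
  have hw0 : ∀ n, w n ≠ 0 := by
    intro n h0
    apply hnotmem n
    have : u (n+1) = p n := by rwa [hw, sub_eq_zero] at h0
    rw [this]; exact hpV n
  set x : ℕ → E := fun n => ((‖w n‖⁻¹ : ℝ):ℂ) • w n with hx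
  have hxnorm : ∀ n, ‖x n‖ = 1 := by
    intro n
    rw [hx, norm_smul, Complex.norm_real, Real.norm_eq_abs,
      abs_of_pos (inv_pos.mpr (norm_pos_iff.mpr (hw0 n))),
      inv_mul_cancel₀ (norm_ne_zero_iff.mpr (hw0 n))]
  have hxV : ∀ n, x n ∈ V (n+1) := by
    intro n
    apply Submodule.smul_mem
    exact Submodule.sub_mem _ (huV (n+1)) (hVmono (Nat.le_succ n) (hpV n))
  have hxorth : ∀ n, x n ∈ (V n)ᗮ := by
    intro n
    apply Submodule.smul_mem
    exact Submodule.sub_starProjection_mem_orthogonal (K := V n) (u (n+1))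
  have hkey : ∀ n, S (x n) - μ (n+1) • x n ∈ V n := by
    intro n
    have h1 : S (w n) - μ (n+1) • w n = μ (n+1) • p n - S (p n) := by
      rw [hw, map_sub, heig (n+1), smul_sub]
      abel
    have h2 : S (x n) - μ (n+1) • x n
        = ((‖w n‖⁻¹ : ℝ):ℂ) • (S (w n) - μ (n+1) • w n) := by
      rw [hx, map_smul, smul_sub, smul_comm (μ (n+1))]
    rw [h2, h1]
    exact Submodule.smul_mem _ _
      (Submodule.sub_mem _ (Submodule.smul_mem _ _ (hpV n)) (hSV n _ (hpV n)))
  have hsep : ∀ m n, m < n → δ ≤ ‖S (x n) - S (x m)‖ := by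
    intro m n hmn
    have hSxm : S (x m) ∈ V n := hVmono (by omega : m+1 ≤ n) (hSV (m+1) _ (hxV m))
    have hmemh : (S (x n) - μ (n+1) • x n) - S (x m) ∈ V n :=
      Submodule.sub_mem _ (hkey n) hSxm
    have hinner : @inner ℂ _ _ (x n) (S (x n) - S (x m)) = μ (n+1) := by
      have hdecomp : S (x n) - S (x m)
          = μ (n+1) • x n + ((S (x n) - μ (n+1) • x n) - S (x m)) := by abel
      rw [hdecomp, inner_add_right, inner_smul_right]
      have h0 : @inner ℂ _ _ (x n) ((S (x n) - μ (n+1) • x n) - S (x m)) = 0 := by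
        rw [← inner_conj_symm, hxorth n _ hmemh, map_zero]
      rw [h0, add_zero]
      have : @inner ℂ _ _ (x n) (x n) = 1 := by
        rw [inner_self_eq_norm_sq_to_K, hxnorm n]
        norm_num
      rw [this, mul_one]
    calc δ ≤ ‖μ (n+1)‖ := hμ (n+1)
      _ = ‖@inner ℂ _ _ (x n) (S (x n) - S (x m))‖ := by rw [hinner]
      _ ≤ ‖x n‖ * ‖S (x n) - S (x m)‖ := norm_inner_le_norm _ _
      _ = ‖S (x n) - S (x m)‖ := by rw [hxnorm n, one_mul]
  obtain ⟨v, φ, hφ, hconv⟩ := hS.exists_subseq x (fun n => le_of_eq (hxnorm n))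
  have hcauchy : CauchySeq (fun n => S (x (φ n))) := hconv.cauchySeq
  obtain ⟨N, hN⟩ := Metric.cauchySeq_iff.mp hcauchy δ hδ
  have h1 := hN (N+1) (by omega) N (le_refl N)
  rw [dist_eq_norm] at h1
  exact absurd h1 (not_lt.mpr (hsep (φ N) (φ (N+1)) (hφ (by omega))))

/-- The operator `1 + T K₀` with `K₀ = -i - rJ` is invertible whenever
`Im ⟪u, Tu⟫ ≥ 0` for all `u` and `J` is self-adjoint. -/
lemma isUnit_one_add_T_K0 (T J : E →L[ℂ] E) (hTim : ∀ u, 0 ≤ (⟪u, T u⟫).im)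
    (hJ : IsSelfAdjoint J) (r : ℝ) :
    IsUnit (1 + T * ((-Complex.I) • (1 : E →L[ℂ] E) - (r:ℂ) • J)) := by
  set K₀ : E →L[ℂ] E := (-Complex.I) • (1 : E →L[ℂ] E) - (r:ℂ) • J with hK0
  set E₀ : E →L[ℂ] E := 1 + T * K₀ with hE0
  have hKadj : adjoint K₀ = Complex.I • (1 : E →L[ℂ] E) - (r:ℂ) • J := by
    rw [← ContinuousLinearMap.star_eq_adjoint, hK0, star_sub, star_smul, star_smul, star_one,
      hJ.star_eq]
    simp [Complex.star_def]
  have hEadj : adjoint E₀ = 1 + adjoint K₀ * adjoint T := by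
    rw [← ContinuousLinearMap.star_eq_adjoint, hE0, star_add, star_one, star_mul,
      ContinuousLinearMap.star_eq_adjoint, ContinuousLinearMap.star_eq_adjoint]
  have hnorm : ∀ u : E, ⟪u, u⟫ = ((‖u‖^2 : ℝ) : ℂ) := by
    intro u; rw [inner_self_eq_norm_sq_to_K]; norm_cast
  have h2 : ∀ u, ‖u‖ ≤ (1 + ‖K₀‖) * ‖E₀ u‖ := by
    intro u
    have hEapp : E₀ u = u + T (K₀ u) := rfl
    have hK1 : (⟪K₀ u, u⟫).im = ‖u‖^2 := by
      rw [hK0]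
      simp only [ContinuousLinearMap.sub_apply, ContinuousLinearMap.smul_apply,
        ContinuousLinearMap.one_apply, inner_sub_left, inner_smul_left]
      rw [hnorm u]
      simp only [Complex.sub_im, Complex.mul_im, Complex.conj_re, Complex.conj_im,
        Complex.ofReal_re, Complex.ofReal_im, Complex.neg_im, Complex.neg_re, Complex.I_re,
        Complex.I_im, im_inner_map_self_eq_zero hJ u]
      simp
    have ha : ‖u‖^2 ≤ (⟪K₀ u, E₀ u⟫).im := by
      rw [hEapp, inner_add_right]
      rw [Complex.add_im, hK1]
      have := hTim (K₀ u)
      linarith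
    have hb : ‖u‖^2 ≤ ‖K₀‖ * ‖u‖ * ‖E₀ u‖ := by
      calc ‖u‖^2 ≤ (⟪K₀ u, E₀ u⟫).im := ha
        _ ≤ ‖⟪K₀ u, E₀ u⟫‖ :=
            le_trans (le_abs_self _) (Complex.abs_im_le_norm _)
        _ ≤ ‖K₀ u‖ * ‖E₀ u‖ := norm_inner_le_norm _ _
        _ ≤ (‖K₀‖ * ‖u‖) * ‖E₀ u‖ :=
            mul_le_mul_of_nonneg_right (ContinuousLinearMap.le_opNorm K₀ u) (norm_nonneg _)
        _ = ‖K₀‖ * ‖u‖ * ‖E₀ u‖ := by ring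
    have hc := le_of_sq_le ‖u‖ ‖K₀‖ ‖E₀ u‖ (norm_nonneg _) (norm_nonneg _) (norm_nonneg _) hb
    calc ‖u‖ ≤ ‖K₀‖ * ‖E₀ u‖ := hc
      _ ≤ (1 + ‖K₀‖) * ‖E₀ u‖ :=
          mul_le_mul_of_nonneg_right (by linarith) (norm_nonneg _)
  have h3 : ∀ u, ‖u‖ ≤ (1 + ‖K₀‖) * ‖adjoint E₀ u‖ := by
    intro u
    set v := adjoint T u with hv
    have hEapp : adjoint E₀ u = u + adjoint K₀ v := by rw [hEadj]; rfl
    have hK1 : (⟪v, adjoint K₀ v⟫).im = ‖v‖^2 := by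
      rw [hKadj]
      simp only [ContinuousLinearMap.sub_apply, ContinuousLinearMap.smul_apply,
        ContinuousLinearMap.one_apply, inner_sub_right, inner_smul_right]
      rw [hnorm v]
      simp only [Complex.sub_im, Complex.mul_im, Complex.I_re, Complex.I_im,
        Complex.ofReal_re, Complex.ofReal_im, im_inner_map_self_eq_zero' hJ v]
      simp
    have him : 0 ≤ (⟪v, u⟫).im := by
      have h9 : ⟪v, u⟫ = ⟪u, T u⟫ := ContinuousLinearMap.adjoint_inner_left T u u
      rw [h9]; exact hTim u
    have ha : ‖v‖^2 ≤ (⟪v, adjoint E₀ u⟫).im := by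
      rw [hEapp, inner_add_right, Complex.add_im, hK1]
      linarith
    have hb : ‖v‖^2 ≤ 1 * ‖v‖ * ‖adjoint E₀ u‖ := by
      rw [one_mul]
      calc ‖v‖^2 ≤ (⟪v, adjoint E₀ u⟫).im := ha
        _ ≤ ‖⟪v, adjoint E₀ u⟫‖ :=
            le_trans (le_abs_self _) (Complex.abs_im_le_norm _)
        _ ≤ ‖v‖ * ‖adjoint E₀ u‖ := norm_inner_le_norm _ _
    have hc := le_of_sq_le ‖v‖ 1 ‖adjoint E₀ u‖ (norm_nonneg _) zero_le_one (norm_nonneg _) hb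
    rw [one_mul] at hc
    have hKnorm : ‖adjoint K₀‖ = ‖K₀‖ := by
      rw [← ContinuousLinearMap.star_eq_adjoint]; exact norm_star _
    have hu : u = adjoint E₀ u - adjoint K₀ v := by rw [hEapp]; abel
    calc ‖u‖ = ‖adjoint E₀ u - adjoint K₀ v‖ := by rw [← hu]
      _ ≤ ‖adjoint E₀ u‖ + ‖adjoint K₀ v‖ := norm_sub_le _ _
      _ ≤ ‖adjoint E₀ u‖ + ‖adjoint K₀‖ * ‖v‖ :=
          add_le_add (le_refl _) (ContinuousLinearMap.le_opNorm _ _)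
      _ ≤ ‖adjoint E₀ u‖ + ‖K₀‖ * ‖adjoint E₀ u‖ := by
          rw [hKnorm]
          exact add_le_add (le_refl _) (mul_le_mul_of_nonneg_left hc (norm_nonneg _))
      _ = (1 + ‖K₀‖) * ‖adjoint E₀ u‖ := by ring
  exact isUnit_of_bddBelow E₀ (1 + ‖K₀‖) h2 h3

end HilbertAux

variable {𝓗 𝓚 : Type*} [NormedAddCommGroup 𝓗] [InnerProductSpace ℂ 𝓗] [CompleteSpace 𝓗]
  [NormedAddCommGroup 𝓚] [InnerProductSpace ℂ 𝓚] [CompleteSpace 𝓚]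

/-- `Tz F A z = F (A - z)⁻¹ F*`, using `Ring.inverse` (which is the genuine inverse when
`A - z•1` is invertible, as is the case for self-adjoint `A` and nonreal `z`). -/
noncomputable def Tz (F : 𝓗 →L[ℂ] 𝓚) (A : 𝓗 →L[ℂ] 𝓗) (z : ℂ) : 𝓚 →L[ℂ] 𝓚 :=
  F ∘L (Ring.inverse (A - z • (1 : 𝓗 →L[ℂ] 𝓗))) ∘L (adjoint F)

/-- The norm limit `T_{λ+i0}(A)` exists: there is a bounded operator `T` on `𝓚` such that
`T_{λ+iy}(A) → T` in operator norm as `y → 0⁺`. -/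
def NormLimitExists (F : 𝓗 →L[ℂ] 𝓚) (A : 𝓗 →L[ℂ] 𝓗) (lam : ℝ) : Prop :=
  ∃ T : 𝓚 →L[ℂ] 𝓚,
    Tendsto (fun y : ℝ => Tz F A ((lam : ℂ) + y * Complex.I)) (𝓝[>] 0) (𝓝 T)

/-- The direction `F* J F` is `λ`-regular for `H₀`: for some `r ∈ ℝ` the norm limit
`T_{λ+i0}(H₀ + r F* J F)` exists. -/
def IsRegularDirection (F : 𝓗 →L[ℂ] 𝓚) (H₀ : 𝓗 →L[ℂ] 𝓗) (lam : ℝ) (J : 𝓚 →L[ℂ] 𝓚) : Prop :=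
  ∃ r : ℝ, NormLimitExists F (H₀ + (r : ℂ) • ((adjoint F) ∘L J ∘L F)) lam

section TzLemmas

local notation "⟪" x ", " y "⟫" => @inner ℂ _ _ x y

lemma isSelfAdjoint_conj {J : 𝓚 →L[ℂ] 𝓚} (hJ : IsSelfAdjoint J) (F : 𝓗 →L[ℂ] 𝓚) :
    IsSelfAdjoint ((adjoint F) ∘L J ∘L F) := by
  rw [isSelfAdjoint_iff', ContinuousLinearMap.adjoint_comp, ContinuousLinearMap.adjoint_comp,
    ContinuousLinearMap.adjoint_adjoint, ContinuousLinearMap.isSelfAdjoint_iff'.mp hJ,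
    ContinuousLinearMap.comp_assoc]

lemma isCompactOperator_sandwich (F : 𝓗 →L[ℂ] 𝓚) (hF : IsCompactOperator (F : 𝓗 → 𝓚))
    (B : 𝓗 →L[ℂ] 𝓗) : IsCompactOperator ((F ∘L B ∘L adjoint F : 𝓚 →L[ℂ] 𝓚) : 𝓚 → 𝓚) := by
  have h1 : ((F ∘L B ∘L adjoint F : 𝓚 →L[ℂ] 𝓚) : 𝓚 → 𝓚)
      = (F : 𝓗 → 𝓚) ∘ ((B ∘L adjoint F : 𝓚 →L[ℂ] 𝓗) : 𝓚 → 𝓗) := rfl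
  rw [h1]
  exact hF.comp_clm _

lemma adjoint_sandwich (F : 𝓗 →L[ℂ] 𝓚) (B : 𝓗 →L[ℂ] 𝓗) :
    adjoint (F ∘L B ∘L adjoint F) = F ∘L (adjoint B) ∘L adjoint F := by
  rw [ContinuousLinearMap.adjoint_comp, ContinuousLinearMap.adjoint_comp,
    ContinuousLinearMap.adjoint_adjoint, ← ContinuousLinearMap.comp_assoc]

lemma im_inner_Tz_nonneg (F : 𝓗 →L[ℂ] 𝓚) {A : 𝓗 →L[ℂ] 𝓗} (hA : IsSelfAdjoint A)
    {z : ℂ} (hz : 0 < z.im) (u : 𝓚) : 0 ≤ (⟪u, Tz F A z u⟫).im := by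
  set X := A - z • (1 : 𝓗 →L[ℂ] 𝓗) with hX
  have hXu : IsUnit X := isUnit_sub_smul hA (ne_of_gt hz)
  set R := Ring.inverse X with hR
  set φ := adjoint F u with hφ
  set ψ := R φ with hψ
  have h1 : ⟪u, Tz F A z u⟫ = ⟪φ, ψ⟫ := by
    have hTzapp : Tz F A z u = F ψ := rfl
    rw [hTzapp]
    exact (ContinuousLinearMap.adjoint_inner_left F ψ u).symm
  have h2 : X ψ = φ := by
    have := Ring.mul_inverse_cancel _ hXu
    calc X ψ = (X * R) φ := rfl
      _ = φ := by rw [this]; rfl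
  have h3 : ⟪φ, ψ⟫ = ⟪X ψ, ψ⟫ := by rw [h2]
  have h4 : ⟪X ψ, ψ⟫ = ⟪A ψ, ψ⟫ - (starRingEnd ℂ) z * ⟪ψ, ψ⟫ := by
    simp [hX, ContinuousLinearMap.sub_apply, inner_sub_left, inner_smul_left]
    ring
  have h5 : (⟪A ψ, ψ⟫).im = 0 := im_inner_map_self_eq_zero hA ψ
  have h6 : ⟪ψ, ψ⟫ = ((‖ψ‖^2 : ℝ) : ℂ) := by
    rw [inner_self_eq_norm_sq_to_K]; norm_cast
  rw [h1, h3, h4, h6]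
  simp only [Complex.sub_im, h5, Complex.mul_im, Complex.conj_re, Complex.conj_im,
    Complex.ofReal_re, Complex.ofReal_im]
  have : 0 ≤ z.im * ‖ψ‖^2 := by positivity
  simp only [zero_sub, neg_mul, mul_zero, add_zero, neg_neg]
  linarith

/-- The key resolvent identity: for self-adjoint `A`, self-adjoint `K` and nonreal `z`,
`1 + T_z(A) K` is invertible and `T_z(A + F*KF) = (1 + T_z(A) K)⁻¹ T_z(A)`. -/
lemma Tz_perturb (F : 𝓗 →L[ℂ] 𝓚) {A : 𝓗 →L[ℂ] 𝓗} (hA : IsSelfAdjoint A)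
    {K : 𝓚 →L[ℂ] 𝓚} (hK : IsSelfAdjoint K) {z : ℂ} (hz : z.im ≠ 0) :
    IsUnit (1 + Tz F A z * K) ∧
      Tz F (A + (adjoint F) ∘L K ∘L F) z
        = Ring.inverse (1 + Tz F A z * K) * Tz F A z := by
  set X := A - z • (1 : 𝓗 →L[ℂ] 𝓗) with hXdef
  have hXu : IsUnit X := isUnit_sub_smul hA hz
  set V : 𝓗 →L[ℂ] 𝓗 := (adjoint F) ∘L K ∘L F with hVdef
  have hA' : IsSelfAdjoint (A + V) := hA.add (isSelfAdjoint_conj hK F)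
  set X' := (A + V) - z • (1 : 𝓗 →L[ℂ] 𝓗) with hX'def
  have hX'u : IsUnit X' := isUnit_sub_smul hA' hz
  set R := Ring.inverse X with hRdef
  have hRu : IsUnit R := isUnit_ring_inverse_of hXu
  have h1 : X * (1 + R * V) = X' := by
    rw [mul_add, mul_one, ← mul_assoc, Ring.mul_inverse_cancel _ hXu, one_mul]
    rw [hXdef, hX'def]
    abel
  have h2 : (1 + R * V) = R * X' := by
    calc 1 + R * V = (R * X) * (1 + R * V) := by rw [hRdef, Ring.inverse_mul_cancel _ hXu, one_mul]
      _ = R * X' := by rw [mul_assoc, h1]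
  have hu1 : IsUnit (1 + R * V) := by rw [h2]; exact hRu.mul hX'u
  have h3 : Ring.inverse X' = Ring.inverse (1 + R * V) * R := by
    rw [← h1, ring_inverse_mul_of_isUnit hXu hu1]
  set g : 𝓚 →L[ℂ] 𝓗 := R ∘L ((adjoint F) ∘L K) with hgdef
  have hgf : g ∘L F = R * V := rfl
  have hfg : F ∘L g = Tz F A z * K := rfl
  obtain ⟨hunit, hswap⟩ := unit_swap F g (by rw [hgf]; exact hu1)
  rw [hfg] at hunit
  constructor
  · exact hunit
  · have h4 : Tz F (A + V) z = F ∘L ((Ring.inverse (1 + R * V) * R) ∘L adjoint F) := by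
      rw [Tz, ← hX'def, h3]
    rw [h4]
    have h5 : F ∘L ((Ring.inverse (1 + R * V) * R) ∘L adjoint F)
        = (F ∘L Ring.inverse (1 + g ∘L F)) ∘L (R ∘L adjoint F) := by
      rw [hgf]
      rfl
    rw [h5, hswap, hfg]
    rfl

end TzLemmas

/-- `λ` is semi-regular for `H₀` with respect to `F` if and only if the direction `F*F`
is `λ`-regular for `H₀`. -/
theorem semiRegular_iff_FstarF_regular
    (H₀ : 𝓗 →L[ℂ] 𝓗) (hH₀ : IsSelfAdjoint H₀)
    (F : 𝓗 →L[ℂ] 𝓚) (hF : IsCompactOperator F) (lam : ℝ) :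
    (∃ J : 𝓚 →L[ℂ] 𝓚, IsSelfAdjoint J ∧ IsRegularDirection F H₀ lam J) ↔
      (∃ r : ℝ, NormLimitExists F (H₀ + (r : ℂ) • ((adjoint F) ∘L F)) lam) := by
  constructor
  · rintro ⟨J, hJ, hreg⟩
    unfold IsRegularDirection NormLimitExists at hreg
    obtain ⟨r, T, hT⟩ := hreg
    set Hr : 𝓗 →L[ℂ] 𝓗 := H₀ + (r : ℂ) • ((adjoint F) ∘L J ∘L F) with hHrdef
    have hHrsa : IsSelfAdjoint Hr := by
      apply hH₀.add
      have hdir := isSelfAdjoint_conj hJ F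
      rw [isSelfAdjoint_iff', ← ContinuousLinearMap.star_eq_adjoint, star_smul,
        Complex.star_def, Complex.conj_ofReal, ContinuousLinearMap.star_eq_adjoint,
        ContinuousLinearMap.isSelfAdjoint_iff'.mp hdir]
    have hzim : ∀ y : ℝ, ((lam : ℂ) + y * Complex.I).im = y := by
      intro y
      simp [Complex.add_im, Complex.mul_im]
    -- T is compact
    have hTycompact : ∀ y : ℝ,
        IsCompactOperator ((Tz F Hr ((lam:ℂ) + y * Complex.I)) : 𝓚 → 𝓚) := by
      intro y
      exact isCompactOperator_sandwich F hF _
    have hTcompact : IsCompactOperator (T : 𝓚 → 𝓚) :=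
      isCompactOperator_of_tendsto hT (Eventually.of_forall hTycompact)
    -- adjoint of T is compact
    have hadjcont : Continuous (fun A : 𝓚 →L[ℂ] 𝓚 => adjoint A) :=
      (ContinuousLinearMap.adjoint : (𝓚 →L[ℂ] 𝓚) ≃ₗᵢ⋆[ℂ] (𝓚 →L[ℂ] 𝓚)).continuous
    have hTadj : Tendsto (fun y : ℝ => adjoint (Tz F Hr ((lam:ℂ) + y * Complex.I)))
        (𝓝[>] 0) (𝓝 (adjoint T)) := (hadjcont.tendsto T).comp hT
    have hTadjcompact : IsCompactOperator ((adjoint T) : 𝓚 → 𝓚) := by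
      apply isCompactOperator_of_tendsto hTadj
      apply Eventually.of_forall
      intro y
      have h1 : adjoint (Tz F Hr ((lam:ℂ) + y * Complex.I))
          = F ∘L (adjoint (Ring.inverse (Hr - ((lam:ℂ) + y * Complex.I) • 1))) ∘L adjoint F :=
        adjoint_sandwich F _
      rw [h1]
      exact isCompactOperator_sandwich F hF _
    -- positivity of the imaginary part of T
    have hTim : ∀ u : 𝓚, 0 ≤ (@inner ℂ _ _ u (T u)).im := by
      intro u
      have happly : Continuous (fun A : 𝓚 →L[ℂ] 𝓚 => A u) :=
        (ContinuousLinearMap.apply ℂ 𝓚 u).continuous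
      have hinner : Continuous (fun w : 𝓚 => (@inner ℂ _ _ u w).im) :=
        Complex.continuous_im.comp (Continuous.inner continuous_const continuous_id)
      have h2 : Tendsto (fun y : ℝ => (@inner ℂ _ _ u (Tz F Hr ((lam:ℂ) + y * Complex.I) u)).im)
          (𝓝[>] 0) (𝓝 ((@inner ℂ _ _ u (T u)).im)) :=
        (hinner.tendsto (T u)).comp ((happly.tendsto T).comp hT)
      apply ge_of_tendsto h2
      filter_upwards [self_mem_nhdsWithin] with y hy
      exact im_inner_Tz_nonneg F hHrsa (by rw [hzim y]; exact hy) u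
    -- the base-point operator E₀ is invertible
    set K₀ : 𝓚 →L[ℂ] 𝓚 := (-Complex.I) • (1 : 𝓚 →L[ℂ] 𝓚) - (r:ℂ) • J with hK0def
    have hE0 : IsUnit (1 + T * K₀) := isUnit_one_add_T_K0 T J hTim hJ r
    set S : 𝓚 →L[ℂ] 𝓚 := Ring.inverse (1 + T * K₀) * T with hSdef
    have hScompact : IsCompactOperator (S : 𝓚 → 𝓚) :=
      hTcompact.continuous_comp (Ring.inverse (1 + T * K₀)).continuous
    have hSadjcompact : IsCompactOperator ((adjoint S) : 𝓚 → 𝓚) := by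
      have h1 : adjoint S = adjoint T ∘L adjoint (Ring.inverse (1 + T * K₀)) := by
        rw [← ContinuousLinearMap.star_eq_adjoint, hSdef, star_mul,
          ContinuousLinearMap.star_eq_adjoint, ContinuousLinearMap.star_eq_adjoint]
        rfl
      rw [h1]
      exact hTadjcompact.comp_clm _
    -- the one-parameter family
    have hfamily : ∀ c : ℂ, 1 + T * (c • (1 : 𝓚 →L[ℂ] 𝓚) - (r:ℂ) • J)
        = (1 + T * K₀) * (1 + (c + Complex.I) • S) := by
      intro c
      have h1 : (1 + T * K₀) * (1 + (c + Complex.I) • S) = (1 + T * K₀) + (c + Complex.I) • T := by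
        rw [mul_add, mul_one, mul_smul_comm, hSdef, ← mul_assoc,
          Ring.mul_inverse_cancel _ hE0, one_mul]
      rw [h1, hK0def]
      simp only [mul_sub, mul_smul_comm, mul_one]
      have h2 : (c + Complex.I) • T = c • T - (-Complex.I) • T := by
        have h3 : c + Complex.I = c - (-Complex.I) := by ring
        rw [h3, sub_smul]
      rw [h2]
      abel
    -- find a good real coupling constant
    have hexists : ∃ s : ℝ, IsUnit (1 + T * ((s:ℂ) • (1 : 𝓚 →L[ℂ] 𝓚) - (r:ℂ) • J)) := by
      by_contra hall
      push_neg at hall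
      set c : ℕ → ℂ := fun n => ((1/((n:ℝ)+1) : ℝ) : ℂ) + Complex.I with hcdef
      have hcim : ∀ n, (c n).im = 1 := by
        intro n
        simp [hcdef]
      have hc0 : ∀ n, c n ≠ 0 := by
        intro n h0
        have h9 := hcim n
        rw [h0] at h9
        simp at h9
      have hcinj : Function.Injective c := by
        intro a b hab
        have h1 : (((1/((a:ℝ)+1)) : ℝ) : ℂ) = (((1/((b:ℝ)+1)) : ℝ) : ℂ) := by
          have h9 := hab
          simp only [hcdef] at h9
          exact add_right_cancel h9
        have h2 : (1/((a:ℝ)+1)) = (1/((b:ℝ)+1)) := by exact_mod_cast h1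
        rw [one_div, one_div] at h2
        have h3 : ((a:ℝ)+1) = ((b:ℝ)+1) := inv_injective h2
        exact_mod_cast (by linarith : (a:ℝ) = b)
      have hcnorm : ∀ n, ‖c n‖ ≤ 2 := by
        intro n
        calc ‖c n‖ ≤ ‖(((1/((n:ℝ)+1)) : ℝ) : ℂ)‖ + ‖Complex.I‖ := norm_add_le _ _
          _ ≤ 1 + 1 := by
              apply add_le_add
              · rw [Complex.norm_real, Real.norm_eq_abs, abs_of_pos (by positivity)]
                rw [div_le_one (by positivity)]
                linarith [Nat.cast_nonneg (α := ℝ) n]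
              · rw [Complex.norm_I]
          _ = 2 := by norm_num
      have hbad : ∀ n : ℕ, ¬ IsUnit (1 + (c n) • S) := by
        intro n hun
        apply hall (1/((n:ℝ)+1))
        have h1 := hfamily (((1/((n:ℝ)+1)) : ℝ) : ℂ)
        rw [show ((((1/((n:ℝ)+1)) : ℝ) : ℂ) + Complex.I) = c n from rfl] at h1
        rw [h1]
        exact hE0.mul hun
      have hdich : ∀ n : ℕ, (∃ u : 𝓚, u ≠ 0 ∧ S u = (-(c n)⁻¹) • u) ∨
          (∃ u : 𝓚, u ≠ 0 ∧ adjoint S u = (-((starRingEnd ℂ) (c n))⁻¹) • u) := by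
        intro n
        have hS1 : IsCompactOperator (((c n) • S : 𝓚 →L[ℂ] 𝓚) : 𝓚 → 𝓚) :=
          hScompact.smul (c n)
        have hS2 : IsCompactOperator ((adjoint ((c n) • S) : 𝓚 →L[ℂ] 𝓚) : 𝓚 → 𝓚) := by
          have h1 : adjoint ((c n) • S) = (starRingEnd ℂ) (c n) • adjoint S := by
            rw [← ContinuousLinearMap.star_eq_adjoint, star_smul,
              ContinuousLinearMap.star_eq_adjoint]
            rfl
          rw [h1]
          exact hSadjcompact.smul _
        have hker := ker_or_ker_star hS1 hS2 (hbad n)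
        rcases hker with ⟨u, hu0, hu⟩ | ⟨u, hu0, hu⟩
        · left
          refine ⟨u, hu0, ?_⟩
          have h1 : u + (c n) • S u = 0 := by
            have := hu
            simpa [ContinuousLinearMap.add_apply, ContinuousLinearMap.one_apply,
              ContinuousLinearMap.smul_apply] using this
          have h3 : (c n) • S u = -u := eq_neg_of_add_eq_zero_right h1
          have h4 := congrArg (fun w : 𝓚 => (c n)⁻¹ • w) h3
          simp only [smul_smul, inv_mul_cancel₀ (hc0 n), one_smul, smul_neg] at h4
          rw [h4, ← neg_smul]
        · right
          refine ⟨u, hu0, ?_⟩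
          have hcc0 : (starRingEnd ℂ) (c n) ≠ 0 := by
            intro h0
            apply hc0 n
            have h9 := congrArg (starRingEnd ℂ) h0
            simpa using h9
          have h0 : adjoint ((c n) • S) = (starRingEnd ℂ) (c n) • adjoint S := by
            rw [← ContinuousLinearMap.star_eq_adjoint, star_smul,
              ContinuousLinearMap.star_eq_adjoint]
            rfl
          rw [h0] at hu
          have h1 : u + ((starRingEnd ℂ) (c n)) • adjoint S u = 0 := by
            simpa [ContinuousLinearMap.add_apply, ContinuousLinearMap.one_apply,
              ContinuousLinearMap.smul_apply] using hu
          have h3 : ((starRingEnd ℂ) (c n)) • adjoint S u = -u := eq_neg_of_add_eq_zero_right h1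
          have h4 := congrArg (fun w : 𝓚 => ((starRingEnd ℂ) (c n))⁻¹ • w) h3
          simp only [smul_smul, inv_mul_cancel₀ hcc0, one_smul, smul_neg] at h4
          rw [h4, ← neg_smul]
      set P : Set ℕ := {n | ∃ u : 𝓚, u ≠ 0 ∧ S u = (-(c n)⁻¹) • u} with hPdef
      set Q : Set ℕ := {n | ∃ u : 𝓚, u ≠ 0 ∧ adjoint S u = (-((starRingEnd ℂ) (c n))⁻¹) • u}
        with hQdef
      have hinf : P.Infinite ∨ Q.Infinite := by
        by_contra hcon
        push_neg at hcon
        have hcon2 := hcon.1.union hcon.2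
        have hunion : P ∪ Q = Set.univ := by
          apply Set.eq_univ_of_forall
          intro n
          rcases hdich n with hn | hn
          · exact Or.inl hn
          · exact Or.inr hn
        rw [hunion] at hcon2
        exact Set.infinite_univ hcon2
      have hnormc : ∀ n, (0:ℝ) < ‖c n‖ := fun n => norm_pos_iff.mpr (hc0 n)
      have hnormeig : ∀ n, (1/2 : ℝ) ≤ ‖-(c n)⁻¹‖ := by
        intro n
        rw [norm_neg, norm_inv]
        have h1 : (2:ℝ)⁻¹ ≤ ‖c n‖⁻¹ := by
          apply inv_anti₀ (hnormc n) (hcnorm n)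
        linarith [h1]
      rcases hinf with hinfP | hinfQ
      · let e := hinfP.natEmbedding
        have hsel : ∀ k : ℕ, ∃ u : 𝓚, u ≠ 0 ∧ S u = (-(c ((e k : ℕ)))⁻¹) • u := fun k => (e k).2
        choose u hu0 heig using hsel
        have hvalinj : Function.Injective (fun k : ℕ => ((e k : ℕ))) :=
          fun a b hab => e.injective (Subtype.coe_injective hab)
        have hμinj : Function.Injective (fun k : ℕ => -(c ((e k : ℕ)))⁻¹) := by
          intro a b hab
          apply hvalinj
          apply hcinj
          exact inv_injective (neg_injective hab)
        exact no_infinite_eigenvalues hScompact (by norm_num : (0:ℝ) < 1/2)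
          (fun k => -(c ((e k : ℕ)))⁻¹) hμinj (fun k => hnormeig _) u hu0 heig
      · let e := hinfQ.natEmbedding
        have hsel : ∀ k : ℕ, ∃ u : 𝓚, u ≠ 0 ∧
            adjoint S u = (-((starRingEnd ℂ) (c ((e k : ℕ))))⁻¹) • u := fun k => (e k).2
        choose u hu0 heig using hsel
        have hvalinj : Function.Injective (fun k : ℕ => ((e k : ℕ))) :=
          fun a b hab => e.injective (Subtype.coe_injective hab)
        have hμinj : Function.Injective
            (fun k : ℕ => -((starRingEnd ℂ) (c ((e k : ℕ))))⁻¹) := by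
          intro a b hab
          apply hvalinj
          apply hcinj
          exact (starRingEnd ℂ).injective (inv_injective (neg_injective hab))
        have hnormeig' : ∀ k : ℕ, (1/2:ℝ) ≤ ‖-((starRingEnd ℂ) (c ((e k : ℕ))))⁻¹‖ := by
          intro k
          have h1 : ‖(starRingEnd ℂ) (c ((e k : ℕ)))‖ = ‖c ((e k : ℕ))‖ := by
            simp
          rw [norm_neg, norm_inv, h1, ← norm_inv, ← norm_neg]
          exact hnormeig _
        exact no_infinite_eigenvalues hSadjcompact (by norm_num : (0:ℝ) < 1/2)
          (fun k => -((starRingEnd ℂ) (c ((e k : ℕ))))⁻¹) hμinj hnormeig' u hu0 heig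
    -- conclude
    obtain ⟨s, hsu⟩ := hexists
    set Ks : 𝓚 →L[ℂ] 𝓚 := (s:ℂ) • (1 : 𝓚 →L[ℂ] 𝓚) - (r:ℂ) • J with hKsdef
    have hKssa : IsSelfAdjoint Ks := by
      have h9 : star Ks = Ks := by
        rw [hKsdef]
        simp only [star_sub, star_smul, star_one, Complex.star_def, Complex.conj_ofReal,
          hJ.star_eq]
      exact h9
    have halg : Hr + (adjoint F) ∘L Ks ∘L F = H₀ + (s:ℂ) • ((adjoint F) ∘L F) := by
      ext v
      simp only [hHrdef, hKsdef, ContinuousLinearMap.add_apply, ContinuousLinearMap.comp_apply,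
        ContinuousLinearMap.smul_apply, ContinuousLinearMap.sub_apply,
        ContinuousLinearMap.one_apply, map_sub, map_smul]
      abel
    refine ⟨s, Ring.inverse (1 + T * Ks) * T, ?_⟩
    have hid : ∀ y : ℝ, y ∈ Set.Ioi (0:ℝ) →
        Tz F (H₀ + (s:ℂ) • ((adjoint F) ∘L F)) ((lam:ℂ) + y * Complex.I)
          = Ring.inverse (1 + Tz F Hr ((lam:ℂ) + y * Complex.I) * Ks)
            * Tz F Hr ((lam:ℂ) + y * Complex.I) := by
      intro y hy
      rw [← halg]
      exact (Tz_perturb F hHrsa hKssa (by rw [hzim y]; exact ne_of_gt hy)).2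
    have hten : Tendsto (fun y : ℝ => Ring.inverse (1 + Tz F Hr ((lam:ℂ) + y * Complex.I) * Ks)
        * Tz F Hr ((lam:ℂ) + y * Complex.I)) (𝓝[>] 0)
        (𝓝 (Ring.inverse (1 + T * Ks) * T)) := by
      have h1 : Tendsto (fun y : ℝ => 1 + Tz F Hr ((lam:ℂ) + y * Complex.I) * Ks) (𝓝[>] 0)
          (𝓝 (1 + T * Ks)) := tendsto_const_nhds.add (hT.mul tendsto_const_nhds)
      have h2 : ContinuousAt (Ring.inverse : (𝓚 →L[ℂ] 𝓚) → (𝓚 →L[ℂ] 𝓚)) (1 + T * Ks) := by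
        have := NormedRing.inverse_continuousAt hsu.unit
        rwa [hsu.unit_spec] at this
      exact (h2.tendsto.comp h1).mul hT
    apply hten.congr'
    filter_upwards [self_mem_nhdsWithin] with y hy
    exact (hid y hy).symm
  · rintro ⟨r, hr⟩
    refine ⟨1, (IsSelfAdjoint.one _), r, ?_⟩
    have h1 : (adjoint F) ∘L (1 : 𝓚 →L[ℂ] 𝓚) ∘L F = (adjoint F) ∘L F := by
      rw [ContinuousLinearMap.one_def, ContinuousLinearMap.id_comp]
    rw [h1]
    exact hr
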